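/- Let f(x) = (x−1)^6 and g(x) = (x²+x+1)(x⁴+1), let A, B ∈ GL₆(ℤ) be their companion matrices, and let v = (A⁻¹B − I)(e₆). Then v = (−7, 14, −20, 14, −7, 0), and the matrix γ = A·B⁵ satisfies: the coefficient of e₆ in γ(v) lies in {1, −1, 2, −2}, and the three vectors v, γ(v), γ⁻¹(v) are linearly independent over ℚ. -/

import Mathlib

open Matrix Polynomial

/-- The companion matrix of a monic polynomial `p` of degree `n`: it sends
`e_i ↦ e_{i+1}` for `1 ≤ i ≤ n-1` (zero-indexed: column `j` is `e_{j+1}` when `j+1 < n`),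
and `e_n ↦ -(c_0 e_1 + c_1 e_2 + ⋯ + c_{n-1} e_n)`. -/
def companionMat (n : ℕ) (p : Polynomial ℤ) : Matrix (Fin n) (Fin n) ℤ :=
  Matrix.of fun i j =>
    if (j : ℕ) + 1 < n then (if (i : ℕ) = (j : ℕ) + 1 then 1 else 0) else -p.coeff (i : ℕ)

lemma vec6_at5 {α : Type*} (a b c d e f : α) : ![a,b,c,d,e,f] (5 : Fin 6) = f := rfl

set_option maxHeartbeats 1600000 in
/-- for γ = AB⁵ the coefficient of e₆ in γ(v) lies in {1, -1, 2, -2} and v, γ(v), γ⁻¹(v) are linearly independent over ℚ. -/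
theorem entry22_certificate (f g : Polynomial ℤ)
    (hf : f = (Polynomial.X - 1) ^ 6)
    (hg : g = (Polynomial.X ^ 2 + Polynomial.X + 1) * (Polynomial.X ^ 4 + 1))
    (A B : GL (Fin 6) ℤ)
    (hA : (A : Matrix (Fin 6) (Fin 6) ℤ) = companionMat 6 f)
    (hB : (B : Matrix (Fin 6) (Fin 6) ℤ) = companionMat 6 g)
    (v : Fin 6 → ℤ)
    (hv : v = ((A⁻¹ * B : GL (Fin 6) ℤ) : Matrix (Fin 6) (Fin 6) ℤ) *ᵥ
      Pi.single (5 : Fin 6) 1 - Pi.single (5 : Fin 6) 1)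
    (γ : GL (Fin 6) ℤ) (hγ : γ = A * B ^ 5) :
    v = ![-7, 14, -20, 14, -7, 0] ∧
    ((γ : Matrix (Fin 6) (Fin 6) ℤ) *ᵥ v) 5 ∈ ({1, -1, 2, -2} : Set ℤ) ∧
    LinearIndependent ℚ
      ![(fun i => (v i : ℚ)),
        (fun i => (((γ : Matrix (Fin 6) (Fin 6) ℤ) *ᵥ v) i : ℚ)),
        (fun i => (((↑γ⁻¹ : Matrix (Fin 6) (Fin 6) ℤ) *ᵥ v) i : ℚ))] := by
  have hf' : f = C 1 * X^6 + C (-6) * X^5 + C 15 * X^4 + C (-20) * X^3 + C 15 * X^2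
      + C (-6) * X + C 1 := by
    rw [hf]; simp only [_root_.map_one, map_neg, map_ofNat]; ring
  have hg' : g = C 1 * X^6 + C 1 * X^5 + C 1 * X^4 + C 0 * X^3 + C 1 * X^2
      + C 1 * X + C 1 := by
    rw [hg]; simp only [_root_.map_one, map_zero, map_ofNat]; ring
  have cf0 : f.coeff 0 = 1 := by rw [hf']; simp [coeff_add, coeff_C_mul, coeff_X_pow, coeff_C, coeff_X, coeff_one]
  have cf1 : f.coeff 1 = -6 := by rw [hf']; simp [coeff_add, coeff_C_mul, coeff_X_pow, coeff_C, coeff_X, coeff_one]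
  have cf2 : f.coeff 2 = 15 := by rw [hf']; simp [coeff_add, coeff_C_mul, coeff_X_pow, coeff_C, coeff_X, coeff_one]
  have cf3 : f.coeff 3 = -20 := by rw [hf']; simp [coeff_add, coeff_C_mul, coeff_X_pow, coeff_C, coeff_X, coeff_one]
  have cf4 : f.coeff 4 = 15 := by rw [hf']; simp [coeff_add, coeff_C_mul, coeff_X_pow, coeff_C, coeff_X, coeff_one]
  have cf5 : f.coeff 5 = -6 := by rw [hf']; simp [coeff_add, coeff_C_mul, coeff_X_pow, coeff_C, coeff_X, coeff_one]
  have cg0 : g.coeff 0 = 1 := by rw [hg']; simp [coeff_add, coeff_C_mul, coeff_X_pow, coeff_C, coeff_X, coeff_one]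
  have cg1 : g.coeff 1 = 1 := by rw [hg']; simp [coeff_add, coeff_C_mul, coeff_X_pow, coeff_C, coeff_X, coeff_one]
  have cg2 : g.coeff 2 = 1 := by rw [hg']; simp [coeff_add, coeff_C_mul, coeff_X_pow, coeff_C, coeff_X, coeff_one]
  have cg3 : g.coeff 3 = 0 := by rw [hg']; simp [coeff_add, coeff_C_mul, coeff_X_pow, coeff_C, coeff_X, coeff_one]
  have cg4 : g.coeff 4 = 1 := by rw [hg']; simp [coeff_add, coeff_C_mul, coeff_X_pow, coeff_C, coeff_X, coeff_one]
  have cg5 : g.coeff 5 = 1 := by rw [hg']; simp [coeff_add, coeff_C_mul, coeff_X_pow, coeff_C, coeff_X, coeff_one]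
  have hAm : (A : Matrix (Fin 6) (Fin 6) ℤ) =
      !![0,0,0,0,0,-1; 1,0,0,0,0,6; 0,1,0,0,0,-15; 0,0,1,0,0,20; 0,0,0,1,0,-15; 0,0,0,0,1,6] := by
    rw [hA]; ext i j
    fin_cases i <;> fin_cases j <;>
      norm_num [companionMat, cf0, cf1, cf2, cf3, cf4, cf5, vec6_at5]
  have hBm : (B : Matrix (Fin 6) (Fin 6) ℤ) =
      !![0,0,0,0,0,-1; 1,0,0,0,0,-1; 0,1,0,0,0,-1; 0,0,1,0,0,0; 0,0,0,1,0,-1; 0,0,0,0,1,-1] := by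
    rw [hB]; ext i j
    fin_cases i <;> fin_cases j <;>
      norm_num [companionMat, cg0, cg1, cg2, cg3, cg4, cg5, vec6_at5]
  have hAim : ((A⁻¹ : GL (Fin 6) ℤ) : Matrix (Fin 6) (Fin 6) ℤ) =
      !![6,1,0,0,0,0; -15,0,1,0,0,0; 20,0,0,1,0,0; -15,0,0,0,1,0; 6,0,0,0,0,1; -1,0,0,0,0,0] := by
    rw [Matrix.coe_units_inv, hAm]
    apply Matrix.inv_eq_right_inv
    decide
  have hγm : ((γ : GL (Fin 6) ℤ) : Matrix (Fin 6) (Fin 6) ℤ) =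
      !![-1,1,0,-1,2,-1; 6,-7,1,6,-13,8; -15,14,0,-14,29,-14; 20,-21,0,20,-40,21;
         -15,15,-1,-15,30,-15; 6,-7,1,5,-13,8] := by
    rw [hγ, Units.val_mul, Units.val_pow_eq_pow_val, hAm, hBm]
    decide
  have hγim : ((γ⁻¹ : GL (Fin 6) ℤ) : Matrix (Fin 6) (Fin 6) ℤ) =
      !![49,1,-2,1,0,-1; -14,2,-1,-1,1,-1; 15,0,0,0,-1,0; 0,1,0,0,0,-1; 35,1,-1,1,0,-1;
         6,2,-1,0,1,-1] := by
    rw [Matrix.coe_units_inv, hγm]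
    apply Matrix.inv_eq_right_inv
    decide
  have hvm : v = ![-7, 14, -20, 14, -7, 0] := by
    rw [hv, Units.val_mul, hAim, hBm]
    decide
  have hgv : ((γ : Matrix (Fin 6) (Fin 6) ℤ) *ᵥ v) = ![-7, 15, -98, 126, -85, 1] := by
    rw [hγm, hvm]; decide
  have hgiv : (((↑γ⁻¹ : Matrix (Fin 6) (Fin 6) ℤ)) *ᵥ v) = ![-275, 125, -98, 14, -197, -1] := by
    rw [hγim, hvm]; decide
  refine ⟨hvm, ?_, ?_⟩
  · rw [hgv]; left; rfl
  · have h1 : (fun i => (v i : ℚ)) = ![-7, 14, -20, 14, -7, 0] := by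
      rw [hvm]; funext i; fin_cases i <;> norm_num [vec6_at5]
    have h2 : (fun i => (((γ : Matrix (Fin 6) (Fin 6) ℤ) *ᵥ v) i : ℚ))
        = ![-7, 15, -98, 126, -85, 1] := by
      rw [hgv]; funext i; fin_cases i <;> norm_num [vec6_at5]
    have h3 : (fun i => (((↑γ⁻¹ : Matrix (Fin 6) (Fin 6) ℤ) *ᵥ v) i : ℚ))
        = ![-275, 125, -98, 14, -197, -1] := by
      rw [hgiv]; funext i; fin_cases i <;> norm_num [vec6_at5]
    rw [h1, h2, h3]
    have key : LinearIndependent ℚ (fun i =>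
        (!![-7,14,-20; -7,15,-98; -275,125,-98] : Matrix (Fin 3) (Fin 3) ℚ) i) := by
      change LinearIndependent ℚ (Matrix.row (!![-7,14,-20; -7,15,-98; -275,125,-98] : Matrix (Fin 3) (Fin 3) ℚ))
      rw [Matrix.linearIndependent_rows_iff_isUnit, Matrix.isUnit_iff_isUnit_det]
      rw [Matrix.det_fin_three]
      simp [Matrix.vecHead, Matrix.vecTail]
      norm_num [Matrix.vecHead, Matrix.vecTail]
    refine LinearIndependent.of_comp
      (LinearMap.funLeft ℚ ℚ (fun k : Fin 3 => Fin.castLE (by norm_num) k)) ?_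
    have h : (⇑(LinearMap.funLeft ℚ ℚ (fun k : Fin 3 => Fin.castLE (by norm_num) k)) ∘
        ![(![-7, 14, -20, 14, -7, 0] : Fin 6 → ℚ),
          ![-7, 15, -98, 126, -85, 1], ![-275, 125, -98, 14, -197, -1]]) =
        (fun i => (!![-7,14,-20; -7,15,-98; -275,125,-98] : Matrix (Fin 3) (Fin 3) ℚ) i) := by
      funext i k
      fin_cases i <;> fin_cases k <;> rfl
    rw [h]; exact key
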